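/- Let G be a chordal graph and W a set of vertices inducing a connected subgraph such that some clique Q ⊆ N(W) satisfies: every vertex of Q has a neighbor in W and there is no vertex of W adjacent to all of Q. Then G contains an induced cycle of length at least 4. Equivalently, in a chordal graph, if G[W] is connected and Q is a clique with each vertex of Q having a neighbor in W, then some vertex of W is adjacent to every vertex of Q. -/

import Mathlib

open SimpleGraph

section Defs
variable {V : Type*}

/-- `S` is a dominating set of `G`. -/
def Dominates (G : SimpleGraph V) (S : Set V) : Prop :=
  ∀ v : V, v ∈ S ∨ ∃ u ∈ S, G.Adj u v

/-- The domination number `γ(G)`. -/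
noncomputable def domNum (G : SimpleGraph V) [Fintype V] : ℕ :=
  sInf {n | ∃ S : Finset V, S.card = n ∧ Dominates G ↑S}

/-- The bondage number `b(G)`. -/
noncomputable def bondageNum (G : SimpleGraph V) [Fintype V] : ℕ :=
  sInf {n | ∃ A : Finset (Sym2 V), ↑A ⊆ G.edgeSet ∧ A.card = n ∧
    domNum (G.deleteEdges ↑A) = domNum G + 1}

/-- The clique number `ω(G)`. -/
noncomputable def cliqueNum' (G : SimpleGraph V) [Fintype V] : ℕ :=
  sSup {n | ∃ s : Finset V, G.IsNClique n s}

/-- The degree of a vertex. -/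
noncomputable def vdeg (G : SimpleGraph V) (v : V) : ℕ := (G.neighborSet v).ncard

/-- The maximum degree `Δ(G)`. -/
noncomputable def maxDeg (G : SimpleGraph V) [Fintype V] : ℕ :=
  sSup {d | ∃ v, vdeg G v = d}

/-- A chordal graph: no induced cycle of length at least 4. -/
def Chordal (G : SimpleGraph V) : Prop :=
  ∀ n, 4 ≤ n → IsEmpty (cycleGraph n ↪g G)

/-- The corona `G ∘ K₁`: attach a pendant vertex to each vertex of `G`. -/
def coronaK1 (G : SimpleGraph V) : SimpleGraph (V ⊕ V) :=
  SimpleGraph.fromRel (fun a b =>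
    (∃ u v, a = Sum.inl u ∧ b = Sum.inl v ∧ G.Adj u v) ∨
    (∃ u, a = Sum.inl u ∧ b = Sum.inr u))

end Defs


section Proof
variable {V : Type*} {G : SimpleGraph V}

lemma succ_iff_aux (m : ℕ) (a b : Fin (m + 3)) :
    b = a + 1 ↔ (b.val = a.val + 1 ∨ (a.val = m + 2 ∧ b.val = 0)) := by
  have ha := a.isLt
  have hb := b.isLt
  have h1 : 1 % (m + 3) = 1 := Nat.mod_eq_of_lt (by omega)
  rw [Fin.ext_iff]
  simp only [Fin.add_def, Fin.val_one', Fin.val_mk, h1]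
  rcases Nat.lt_or_ge (a.val + 1) (m + 3) with h | h
  · rw [Nat.mod_eq_of_lt h]; omega
  · have h2 : a.val + 1 = m + 3 := by omega
    rw [h2, Nat.mod_self]; omega

lemma chordal_no_cycle (hch : Chordal G) (m : ℕ) (hm : 1 ≤ m) (f : Fin (m + 3) → V)
    (hinj : Function.Injective f)
    (hadj : ∀ a b : Fin (m + 3), b = a + 1 → G.Adj (f a) (f b))
    (hnadj : ∀ a b : Fin (m + 3), a ≠ b → b ≠ a + 1 → a ≠ b + 1 → ¬G.Adj (f a) (f b)) :
    False := by
  refine (hch (m + 3) (by omega)).false (⟨⟨f, hinj⟩, ?_⟩ : cycleGraph (m+3) ↪g G)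
  intro a b
  have cyc : (cycleGraph (m + 3)).Adj a b ↔ (a = b + 1 ∨ b = a + 1) := by
    rw [show (cycleGraph (m+3)).Adj a b ↔ a - b = 1 ∨ b - a = 1 from cycleGraph_adj (n := m+1)]
    constructor
    · rintro (h | h)
      · left; rw [sub_eq_iff_eq_add] at h; exact h.trans (add_comm 1 b)
      · right; rw [sub_eq_iff_eq_add] at h; exact h.trans (add_comm 1 a)
    · rintro (h | h)
      · left; rw [h]; abel
      · right; rw [h]; abel
  simp only [Function.Embedding.coeFn_mk]
  rw [cyc]
  constructor
  · intro h
    by_contra hc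
    push_neg at hc
    exact hnadj a b (fun he => G.irrefl (he ▸ h)) hc.2 hc.1 h
  · rintro (h | h)
    · exact (hadj b a h).symm
    · exact hadj a b h

lemma key_path (W : Set V) (hconn : (G.induce W).Connected)
    (q w : V) (hwW : w ∈ W) (hwq : ¬G.Adj w q)
    (x₀ : V) (hx₀ : x₀ ∈ W) (hqx₀ : G.Adj q x₀) :
    ∃ (n : ℕ) (x : ℕ → V),
      1 ≤ n ∧ G.Adj q (x 0) ∧ x n = w ∧ (∀ i ≤ n, x i ∈ W) ∧
      (∀ i < n, G.Adj (x i) (x (i + 1))) ∧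
      (∀ i, 1 ≤ i → i ≤ n → ¬G.Adj q (x i)) ∧
      (∀ a b, a + 2 ≤ b → b ≤ n → ¬G.Adj (x a) (x b)) ∧
      (∀ a b, a ≤ n → b ≤ n → x a = x b → a = b) := by
  classical
  have hS : ∃ n, ∃ x : ℕ → V,
      G.Adj q (x 0) ∧ x n = w ∧ (∀ i ≤ n, x i ∈ W) ∧ ∀ i < n, G.Adj (x i) (x (i + 1)) := by
    obtain ⟨p⟩ := hconn.preconnected ⟨x₀, hx₀⟩ ⟨w, hwW⟩
    refine ⟨p.length, fun i => ((p.getVert i : W) : V), ?_, ?_, ?_, ?_⟩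
    · beta_reduce; rw [p.getVert_zero]; exact hqx₀
    · beta_reduce; rw [p.getVert_length]
    · intro i _; exact (p.getVert i).2
    · intro i hi
      have := p.adj_getVert_succ hi
      simpa using this
  obtain ⟨x, hx1, hx2, hx3, hx4⟩ := Nat.find_spec hS
  set n₀ := Nat.find hS with hn₀
  have hmin : ∀ m, m < n₀ → ∀ y : ℕ → V, G.Adj q (y 0) → y m = w →
      (∀ i ≤ m, y i ∈ W) → (∀ i < m, G.Adj (y i) (y (i + 1))) → False := by
    intro m hm y h1 h2 h3 h4
    exact Nat.find_min hS (hn₀ ▸ hm) ⟨y, h1, h2, h3, h4⟩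
  have h1 : 1 ≤ n₀ := by
    by_contra h
    have h0 : n₀ = 0 := by omega
    rw [h0] at hx2
    exact hwq (hx2 ▸ hx1).symm
  have C2 : ∀ i, 1 ≤ i → i ≤ n₀ → ¬G.Adj q (x i) := by
    intro i hi1 hin hA
    refine hmin (n₀ - i) (by omega) (fun j => x (j + i)) ?_ ?_ ?_ ?_ <;> beta_reduce
    · simpa using hA
    · rw [show n₀ - i + i = n₀ from by omega]; exact hx2
    · intro j hj; exact hx3 _ (by omega)
    · intro j hj
      rw [show j + 1 + i = j + i + 1 from by omega]
      exact hx4 _ (by omega)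
  have C3 : ∀ a b, a + 2 ≤ b → b ≤ n₀ → ¬G.Adj (x a) (x b) := by
    intro a b hab hbn hA
    have hk1 : 1 ≤ b - a - 1 := by omega
    have hkn : b - a - 1 ≤ n₀ := by omega
    refine hmin (n₀ - (b - a - 1)) (by omega)
      (fun j => if j ≤ a then x j else x (j + (b - a - 1))) ?_ ?_ ?_ ?_ <;> beta_reduce
    · rw [if_pos (Nat.zero_le a)]; exact hx1
    · rw [if_neg (by omega), show n₀ - (b - a - 1) + (b - a - 1) = n₀ from by omega]
      exact hx2
    · intro j hj
      by_cases h : j ≤ a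
      · rw [if_pos h]; exact hx3 _ (by omega)
      · rw [if_neg h]; exact hx3 _ (by omega)
    · intro j hj
      rcases Nat.lt_trichotomy j a with h | h | h
      · rw [if_pos (by omega), if_pos (by omega)]; exact hx4 _ (by omega)
      · rw [if_pos (by omega), if_neg (by omega), h, show a + 1 + (b - a - 1) = b from by omega]
        exact hA
      · rw [if_neg (by omega), if_neg (by omega),
          show j + 1 + (b - a - 1) = j + (b - a - 1) + 1 from by omega]
        exact hx4 _ (by omega)
  have Cinj : ∀ a b, a ≤ n₀ → b ≤ n₀ → x a = x b → a = b := by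
    have base : ∀ a b, a < b → b ≤ n₀ → x a = x b → False := by
      intro a b hab hbn he
      rcases Nat.lt_or_ge (a + 1) b with h2 | h2
      · rcases Nat.lt_or_ge b n₀ with h3 | h3
        · exact C3 a (b + 1) (by omega) (by omega) (he ▸ hx4 b h3)
        · have hb : b = n₀ := by omega
          rcases Nat.eq_zero_or_pos a with h4 | h4
          · subst h4
            rw [he, hb, hx2] at hx1
            exact hwq hx1.symm
          · have h5 := hx4 (a - 1) (by omega)
            rw [show a - 1 + 1 = a from by omega, he, hb] at h5
            exact C3 (a - 1) n₀ (by omega) (le_refl _) h5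
      · have hb : b = a + 1 := by omega
        subst hb
        exact G.irrefl (he ▸ hx4 a (by omega))
    intro a b han hbn he
    rcases Nat.lt_trichotomy a b with h | h | h
    · exact absurd (base a b h hbn he) (fun f => f)
    · exact h
    · exact absurd (base b a h han he.symm) (fun f => f)
  exact ⟨n₀, x, h1, hx1, hx2, hx3, hx4, C2, C3, Cinj⟩

lemma key (hch : Chordal G) (W : Set V) (hconn : (G.induce W).Connected)
    (q : V) (Q' : Set V) (w : V) (hwW : w ∈ W)
    (hwQ' : ∀ a ∈ Q', G.Adj w a) (hwq : ¬G.Adj w q)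
    (hqQ' : ∀ a ∈ Q', G.Adj q a)
    (hqW : q ∉ W) (hQ'W : ∀ a ∈ Q', a ∉ W)
    (x₀ : V) (hx₀ : x₀ ∈ W) (hqx₀ : G.Adj q x₀) :
    ∃ v ∈ W, G.Adj v q ∧ ∀ a ∈ Q', G.Adj v a := by
  classical
  obtain ⟨n₀, x, h1, hx1, hx2, hx3, hx4, C2, C3, Cinj⟩ :=
    key_path W hconn q w hwW hwq x₀ hx₀ hqx₀
  by_cases hall : ∀ a ∈ Q', G.Adj (x 0) a
  · exact ⟨x 0, hx3 0 (Nat.zero_le _), hx1.symm, hall⟩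
  push_neg at hall
  obtain ⟨q', hq'Q', hq'x0⟩ := hall
  exfalso
  have hq'w : G.Adj q' (x n₀) := by rw [hx2]; exact (hwQ' q' hq'Q').symm
  have hT : ∃ i, i ≤ n₀ ∧ G.Adj q' (x i) := ⟨n₀, le_refl _, hq'w⟩
  set i₀ := Nat.find hT with hi₀
  obtain ⟨hi₀n, hq'i₀⟩ := Nat.find_spec hT
  rw [← hi₀] at hi₀n hq'i₀
  have hq'j : ∀ j < i₀, ¬G.Adj q' (x j) := by
    intro j hj hA
    exact Nat.find_min hT hj ⟨by omega, hA⟩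
  have hi₀1 : 1 ≤ i₀ := by
    rcases Nat.eq_zero_or_pos i₀ with h | h
    · rw [h] at hq'i₀; exact absurd hq'i₀.symm hq'x0
    · exact h
  -- basic distinctness facts
  have hqq' : G.Adj q q' := hqQ' q' hq'Q'
  have hq'W : q' ∉ W := hQ'W q' hq'Q'
  have hqx : ∀ j ≤ n₀, q ≠ x j := fun j hj h => hqW (h ▸ hx3 j hj)
  have hq'x : ∀ j ≤ n₀, q' ≠ x j := fun j hj h => hq'W (h ▸ hx3 j hj)
  -- the cycle
  set f : Fin (i₀ + 3) → V :=
    fun a => if a.val = 0 then q' else if a.val = 1 then q else x (a.val - 2) with hf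
  have fval : ∀ c : Fin (i₀ + 3),
      (c.val = 0 ∧ f c = q') ∨ (c.val = 1 ∧ f c = q) ∨
      (2 ≤ c.val ∧ c.val - 2 ≤ i₀ ∧ f c = x (c.val - 2)) := by
    intro c
    have hc := c.isLt
    rcases Nat.lt_or_ge c.val 2 with h | h
    · rcases Nat.lt_or_ge c.val 1 with h0 | h0
      · left; exact ⟨by omega, by simp only [hf]; rw [if_pos (show c.val = 0 from by omega)]⟩
      · right; left
        refine ⟨by omega, ?_⟩
        simp only [hf]; rw [if_neg (show ¬(c.val = 0) from by omega), if_pos (show c.val = 1 from by omega)]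
    · right; right
      refine ⟨h, by omega, ?_⟩
      simp only [hf]; rw [if_neg (show ¬(c.val = 0) from by omega), if_neg (show ¬(c.val = 1) from by omega)]
  apply chordal_no_cycle hch i₀ hi₀1 f
  · -- injectivity
    intro a b hab
    rcases fval a with ⟨ha, hfa⟩ | ⟨ha, hfa⟩ | ⟨ha, ha', hfa⟩ <;>
      rcases fval b with ⟨hb, hfb⟩ | ⟨hb, hfb⟩ | ⟨hb, hb', hfb⟩ <;>
      rw [hfa, hfb] at hab
    · exact Fin.ext (by omega)
    · exact absurd hab hqq'.ne'
    · exact absurd hab (hq'x _ (by omega))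
    · exact absurd hab hqq'.ne
    · exact Fin.ext (by omega)
    · exact absurd hab (hqx _ (by omega))
    · exact absurd hab.symm (hq'x _ (by omega))
    · exact absurd hab.symm (hqx _ (by omega))
    · have := Cinj _ _ (by omega) (by omega) hab
      exact Fin.ext (by omega)
  · -- consecutive adjacency
    intro a b hb
    rw [succ_iff_aux] at hb
    rcases fval a with ⟨ha, hfa⟩ | ⟨ha, hfa⟩ | ⟨ha, ha', hfa⟩ <;>
      rcases fval b with ⟨hb', hfb⟩ | ⟨hb', hfb⟩ | ⟨hb', hb'', hfb⟩ <;>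
      rw [hfa, hfb]
    · omega
    · exact hqq'.symm
    · omega
    · omega
    · omega
    · rw [show b.val - 2 = 0 from by omega]; exact hx1
    · rw [show a.val - 2 = i₀ from by omega]; exact hq'i₀.symm
    · omega
    · rw [show b.val - 2 = a.val - 2 + 1 from by omega]
      exact hx4 _ (by omega)
  · -- non-adjacency
    intro a b hne hba hab hA
    rw [Ne, succ_iff_aux] at hba hab
    push_neg at hba hab
    have hne' : a.val ≠ b.val := fun h => hne (Fin.ext h)
    rcases fval a with ⟨ha, hfa⟩ | ⟨ha, hfa⟩ | ⟨ha, ha', hfa⟩ <;>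
      rcases fval b with ⟨hb, hfb⟩ | ⟨hb, hfb⟩ | ⟨hb, hb', hfb⟩ <;>
      rw [hfa, hfb] at hA
    · omega
    · omega
    · -- q' vs x (b-2); must have b-2 < i₀
      exact hq'j (b.val - 2) (by omega) hA
    · omega
    · omega
    · -- q vs x (b-2), b-2 ≥ 1 since b ≠ a+1 = 2
      exact C2 (b.val - 2) (by omega) (by omega) hA
    · exact hq'j (a.val - 2) (by omega) hA.symm
    · exact C2 (a.val - 2) (by omega) (by omega) hA.symm
    · -- chords
      rcases Nat.lt_trichotomy a.val b.val with h | h | h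
      · exact C3 (a.val - 2) (b.val - 2) (by omega) (by omega) hA
      · omega
      · exact C3 (b.val - 2) (a.val - 2) (by omega) (by omega) hA.symm

lemma aux_clique_dom (V : Type*) [Fintype V] (G : SimpleGraph V) (hch : Chordal G)
    (W : Set V) (hconn : (G.induce W).Connected) :
    ∀ Qf : Finset V, G.IsClique ↑Qf → (∀ a ∈ Qf, a ∉ W) →
      (∀ q ∈ Qf, ∃ v ∈ W, G.Adj q v) → ∃ w ∈ W, ∀ q ∈ Qf, G.Adj w q := by
  classical
  intro Qf
  induction Qf using Finset.induction_on with
  | empty =>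
    intro _ _ _
    obtain ⟨⟨v, hv⟩⟩ := hconn.nonempty
    exact ⟨v, hv, by simp⟩
  | @insert q s hq ih =>
    intro hclique hdisj hN
    have hsub : (↑s : Set V) ⊆ ↑(insert q s) := by
      intro a ha; simp only [Finset.coe_insert, Set.mem_insert_iff]
      right; exact ha
    have hcl' : G.IsClique ↑s := hclique.subset hsub
    obtain ⟨w, hwW, hwA⟩ := ih hcl'
      (fun a ha => hdisj a (Finset.mem_insert_of_mem ha))
      (fun a ha => hN a (Finset.mem_insert_of_mem ha))
    by_cases hwq : G.Adj w q
    · refine ⟨w, hwW, fun a ha => ?_⟩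
      rcases Finset.mem_insert.mp ha with h | h
      · exact h ▸ hwq
      · exact hwA a h
    · obtain ⟨x₀, hx₀, hqx₀⟩ := hN q (Finset.mem_insert_self q s)
      have hqmem : q ∈ (↑(insert q s) : Set V) := by simp
      have hqQ' : ∀ a ∈ (↑s : Set V), G.Adj q a := by
        intro a ha
        have hamem : a ∈ (↑(insert q s) : Set V) := hsub ha
        have hne : q ≠ a := fun h => hq (h ▸ (Finset.mem_coe.mp ha))
        exact hclique hqmem hamem hne
      obtain ⟨v, hvW, hvq, hvQ'⟩ := key hch W hconn q (↑s) w hwW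
        (fun a ha => hwA a (Finset.mem_coe.mp ha)) hwq hqQ'
        (hdisj q (Finset.mem_insert_self q s))
        (fun a ha => hdisj a (Finset.mem_insert_of_mem (Finset.mem_coe.mp ha)))
        x₀ hx₀ hqx₀
      refine ⟨v, hvW, fun a ha => ?_⟩
      rcases Finset.mem_insert.mp ha with h | h
      · exact h ▸ hvq
      · exact hvQ' a (Finset.mem_coe.mpr h)

end Proof

/-- in a chordal graph, if `G[W]` is connected and `Q ⊆ N(W)` is a
clique each of whose vertices has a neighbor in `W`, then some vertex of `W`
is adjacent to every vertex of `Q`. -/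
theorem exists_vertex_adj_all_clique (V : Type*) [Fintype V] (G : SimpleGraph V)
    (hch : Chordal G) (W Q : Set V)
    (hconn : (G.induce W).Connected)
    (hQ : G.IsClique Q) (hdisj : Disjoint Q W)
    (hQN : ∀ q ∈ Q, ∃ w ∈ W, G.Adj q w) :
    ∃ w ∈ W, ∀ q ∈ Q, G.Adj w q := by
  classical
  obtain ⟨w, hwW, hw⟩ := aux_clique_dom V G hch W hconn (Set.toFinite Q).toFinset
    (by rw [Set.Finite.coe_toFinset]; exact hQ)
    (fun a ha hb => Set.disjoint_left.mp hdisj ((Set.Finite.mem_toFinset _).mp ha) hb)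
    (fun q hq => hQN q ((Set.Finite.mem_toFinset _).mp hq))
  exact ⟨w, hwW, fun q hq => hw q ((Set.Finite.mem_toFinset _).mpr hq)⟩
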